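/- Let A, B, C, D, q ∈ ℂ with q ≠ 0. If f and g are entire functions, each satisfying h'(z) = A·h(qz) + B·h(z)^2 + C·h(z) + D for all z ∈ ℂ, and f(0) = g(0), then f = g. In other words, an entire solution of (†) is uniquely determined by its value at the origin. -/

import Mathlib

open Complex

private lemma itd_add {f g : ℂ → ℂ} (hf : Differentiable ℂ f) (hg : Differentiable ℂ g)
    (n : ℕ) (x : ℂ) :
    iteratedDeriv n (fun z => f z + g z) x = iteratedDeriv n f x + iteratedDeriv n g x := by
  have := iteratedDerivWithin_add (Set.mem_univ x) uniqueDiffOn_univ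
    (hf.contDiff (n := n)).contDiffWithinAt (hg.contDiff (n := n)).contDiffWithinAt
  simpa [iteratedDerivWithin_univ, Pi.add_def] using this

private lemma itd_cmul {f : ℂ → ℂ} (hf : Differentiable ℂ f) (c : ℂ) (n : ℕ) (x : ℂ) :
    iteratedDeriv n (fun z => c * f z) x = c * iteratedDeriv n f x := by
  have := iteratedDerivWithin_const_mul (Set.mem_univ x) uniqueDiffOn_univ c
    (hf.contDiff (n := n)).contDiffWithinAt
  simpa [iteratedDerivWithin_univ] using this

private lemma itd_sub {f g : ℂ → ℂ} (hf : Differentiable ℂ f) (hg : Differentiable ℂ g)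
    (n : ℕ) (x : ℂ) :
    iteratedDeriv n (fun z => f z - g z) x = iteratedDeriv n f x - iteratedDeriv n g x := by
  have := iteratedDerivWithin_sub (Set.mem_univ x) uniqueDiffOn_univ
    (hf.contDiff (n := n)).contDiffWithinAt (hg.contDiff (n := n)).contDiffWithinAt
  simpa [iteratedDerivWithin_univ, Pi.sub_def] using this

private lemma deriv_diff {f : ℂ → ℂ} (hf : Differentiable ℂ f) :
    Differentiable ℂ (deriv f) := by
  have h2 : ContDiff ℂ (⊤ : ℕ∞) f := hf.contDiff
  exact (contDiff_infty_iff_deriv.mp h2).2.differentiable (by simp)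

/-- If all iterated derivatives of `h` up to order `n` vanish at `0`, then the `n`-th
iterated derivative of `v * h` vanishes at `0`. -/
private lemma mul_vanish : ∀ (n : ℕ) (v h : ℂ → ℂ), Differentiable ℂ v → Differentiable ℂ h →
    (∀ k ≤ n, iteratedDeriv k h 0 = 0) → iteratedDeriv n (fun z => v z * h z) 0 = 0 := by
  intro n
  induction n with
  | zero =>
    intro v h _ _ hk
    simpa using Or.inr (hk 0 le_rfl)
  | succ n ih =>
    intro v h hv hh hk
    rw [iteratedDeriv_succ']
    have hder : deriv (fun z => v z * h z) = fun z => deriv v z * h z + v z * deriv h z := by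
      funext z
      exact deriv_mul (hv z) (hh z)
    rw [hder]
    have h1 : iteratedDeriv n (fun z => deriv v z * h z) 0 = 0 :=
      ih (deriv v) h (deriv_diff hv) hh (fun k hkn => hk k (hkn.trans n.le_succ))
    have h2 : iteratedDeriv n (fun z => v z * deriv h z) 0 = 0 := by
      refine ih v (deriv h) hv (deriv_diff hh) (fun k hkn => ?_)
      have := hk (k + 1) (Nat.succ_le_succ hkn)
      rwa [iteratedDeriv_succ'] at this
    rw [itd_add (f := fun z => deriv v z * h z) (g := fun z => v z * deriv h z) ((deriv_diff hv).mul hh) (hv.mul (deriv_diff hh)), h1, h2, add_zero]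

/-- For `q ≠ 0`: two entire solutions of
`h'(z) = A h(qz) + B h(z)² + C h(z) + D` which agree at the origin are equal. -/
theorem stmt17 (A B C D q : ℂ) (hq : q ≠ 0)
    (f g : ℂ → ℂ) (hf : Differentiable ℂ f) (hg : Differentiable ℂ g)
    (heqf : ∀ z : ℂ, deriv f z = A * f (q * z) + B * (f z) ^ 2 + C * f z + D)
    (heqg : ∀ z : ℂ, deriv g z = A * g (q * z) + B * (g z) ^ 2 + C * g z + D)
    (h0 : f 0 = g 0) :
    f = g := by
  set h : ℂ → ℂ := fun z => f z - g z with hh_def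
  set v : ℂ → ℂ := fun z => B * (f z + g z) + C with hv_def
  have hh : Differentiable ℂ h := hf.sub hg
  have hv : Differentiable ℂ v := ((hf.add hg).const_mul B).add_const C
  have hhq : Differentiable ℂ (fun z => h (q * z)) :=
    hh.comp ((differentiable_id.const_mul q))
  have hderh : deriv h = fun z => A * h (q * z) + v z * h z := by
    funext z
    have : deriv h z = deriv f z - deriv g z := by
      rw [hh_def]
      exact deriv_sub (hf z) (hg z)
    rw [this, heqf z, heqg z]
    simp only [hh_def, hv_def]
    ring
  -- all iterated derivatives of h vanish at 0
  have key : ∀ n, iteratedDeriv n h 0 = 0 := by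
    intro n
    induction n using Nat.strong_induction_on with
    | _ n ih =>
      match n with
      | 0 => simpa [hh_def, sub_eq_zero] using h0
      | (m + 1) =>
        rw [iteratedDeriv_succ', hderh]
        have e1 : iteratedDeriv m (fun z => A * h (q * z)) 0 = 0 := by
          rw [itd_cmul hhq A m 0]
          have := congrFun (iteratedDeriv_comp_const_mul (f := h) (hh.contDiff (n := m)) q) 0
          rw [this, mul_zero, ih m (Nat.lt_succ_self m), mul_zero, mul_zero]
        have e2 : iteratedDeriv m (fun z => v z * h z) 0 = 0 :=
          mul_vanish m v h hv hh (fun k hk => ih k (Nat.lt_succ_of_le hk))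
        rw [itd_add (f := fun z => A * h (q * z)) (g := fun z => v z * h z) (hhq.const_mul A) (hv.mul hh), e1, e2, add_zero]
  -- conclude equality of f and g via Taylor series
  funext z
  have hfz := taylorSeries_eq_of_entire' (c := 0) (z := z) hf
  have hgz := taylorSeries_eq_of_entire' (c := 0) (z := z) hg
  rw [← hfz, ← hgz]
  refine tsum_congr fun n => ?_
  have : iteratedDeriv n f 0 = iteratedDeriv n g 0 := by
    have := key n
    rw [hh_def, itd_sub hf hg n 0, sub_eq_zero] at this
    exact this
  rw [this]
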